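/- No single code corrects all flat distributions of a given entropy (Proposition 3.4): Let n, k, m be natural numbers with 1 ≤ m, let Enc : 𝔽₂ᵏ → 𝔽₂ⁿ be injective and Dec : 𝔽₂ⁿ → 𝔽₂ᵏ be arbitrary, and let S be any set of 2^m distinct codewords, i.e., S ⊆ Enc(𝔽₂ᵏ) with |S| = 2^m. Then there exists a message x ∈ 𝔽₂ᵏ with Enc(x) ∈ S such that the number of z ∈ S with Dec(Enc(x) + z) ≠ x is at least 2^{m−1}. Consequently, the uniform distribution over S — a flat distribution of entropy m — is not corrected by the code (Enc, Dec) with any error ε < 1/2. -/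

import Mathlib

open Classical in
/-- No single code corrects all flat distributions of a given entropy
(Proposition 3.4). -/
theorem no_code_corrects_all_flat_distributions
    (n k m : ℕ) (hm : 1 ≤ m)
    (Enc : (Fin k → ZMod 2) → (Fin n → ZMod 2)) (hEnc : Function.Injective Enc)
    (Dec : (Fin n → ZMod 2) → (Fin k → ZMod 2))
    (S : Finset (Fin n → ZMod 2)) (hS : ↑S ⊆ Set.range Enc)
    (hcard : S.card = 2 ^ m) :
    ∃ x : Fin k → ZMod 2, Enc x ∈ S ∧
      2 ^ (m - 1) ≤ (S.filter (fun z => Dec (Enc x + z) ≠ x)).card := by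
  classical
  set msg : (Fin n → ZMod 2) → (Fin k → ZMod 2) :=
    fun c => if h : c ∈ Set.range Enc then h.choose else 0 with hmsg
  have hmsg_spec : ∀ c ∈ S, Enc (msg c) = c := by
    intro c hc
    have h : c ∈ Set.range Enc := hS hc
    simp only [hmsg, dif_pos h]
    exact h.choose_spec
  by_contra hcon
  push_neg at hcon
  have hF : ∀ c ∈ S, (S.filter (fun z => Dec (c + z) ≠ msg c)).card ≤ 2 ^ (m - 1) - 1 := by
    intro c hc
    have h1 := hcon (msg c)
    rw [hmsg_spec c hc] at h1
    have h2 := h1 hc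
    omega
  set T : Finset ((Fin n → ZMod 2) × (Fin n → ZMod 2)) :=
    (S ×ˢ S).filter (fun p => Dec (p.1 + p.2) ≠ msg p.1) with hT
  -- the pairing map
  set g : ((Fin n → ZMod 2) × (Fin n → ZMod 2)) → ((Fin n → ZMod 2) × (Fin n → ZMod 2)) :=
    fun p => if Dec (p.1 + p.2) ≠ msg p.1 then p else p.swap with hg
  have hmaps : ∀ p ∈ S.offDiag, g p ∈ T := by
    intro p hp
    rw [Finset.mem_offDiag] at hp
    obtain ⟨h1, h2, hne⟩ := hp
    by_cases hd : Dec (p.1 + p.2) ≠ msg p.1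
    · simp only [hg, if_pos hd, hT, Finset.mem_filter, Finset.mem_product]
      exact ⟨⟨h1, h2⟩, hd⟩
    · push_neg at hd
      have hd2 : Dec (p.2 + p.1) ≠ msg p.2 := by
        rw [add_comm, hd]
        intro he
        apply hne
        rw [← hmsg_spec p.1 h1, ← hmsg_spec p.2 h2, ← he]
      simp only [hg, if_neg (not_not.mpr hd)]
      simp only [hT, Finset.mem_filter, Finset.mem_product, Prod.fst_swap, Prod.snd_swap]
      exact ⟨⟨h2, h1⟩, hd2⟩
  -- each fiber of g has at most 2 elements
  have hfiber : ∀ q ∈ T, (S.offDiag.filter (fun p => g p = q)).card ≤ 2 := by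
    intro q _
    have hsub : S.offDiag.filter (fun p => g p = q) ⊆ {q, q.swap} := by
      intro p hp
      rw [Finset.mem_filter] at hp
      have : g p = q := hp.2
      simp only [hg] at this
      by_cases hd : Dec (p.1 + p.2) ≠ msg p.1
      · rw [if_pos hd] at this
        simp [this]
      · rw [if_neg hd] at this
        have : p = q.swap := by rw [← this]; simp
        simp [this]
    calc (S.offDiag.filter (fun p => g p = q)).card ≤ ({q, q.swap} : Finset _).card :=
          Finset.card_le_card hsub
      _ ≤ 2 := Finset.card_insert_le _ _ |>.trans (by simp)
  have hoff : S.offDiag.card ≤ 2 * T.card :=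
    Finset.card_le_mul_card_image_of_maps_to hmaps 2 hfiber
  -- T.card ≤ sum of failure counts
  have hTsum : T.card ≤ ∑ c ∈ S, (S.filter (fun z => Dec (c + z) ≠ msg c)).card := by
    rw [Finset.card_eq_sum_card_fiberwise (f := Prod.fst) (t := S)
      (fun p hp => (Finset.mem_product.mp (Finset.mem_filter.mp hp).1).1)]
    apply Finset.sum_le_sum
    intro c hc
    apply Finset.card_le_card_of_injOn Prod.snd
    · intro p hp
      simp only [Finset.mem_coe, Finset.mem_filter] at hp ⊢
      obtain ⟨hpT, hpc⟩ := hp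
      refine ⟨(Finset.mem_product.mp hpT.1).2, ?_⟩
      rw [← hpc]
      exact hpT.2
    · intro p hp p' hp' he
      simp only [Finset.mem_coe, Finset.mem_filter] at hp hp'
      exact Prod.ext (hp.2.trans hp'.2.symm) he
  have hsum : ∑ c ∈ S, (S.filter (fun z => Dec (c + z) ≠ msg c)).card
      ≤ 2 ^ m * (2 ^ (m - 1) - 1) := by
    calc ∑ c ∈ S, (S.filter (fun z => Dec (c + z) ≠ msg c)).card
        ≤ ∑ _c ∈ S, (2 ^ (m - 1) - 1) := Finset.sum_le_sum hF
      _ = 2 ^ m * (2 ^ (m - 1) - 1) := by rw [Finset.sum_const, smul_eq_mul, hcard]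
  have hoffcard : S.offDiag.card = 2 ^ m * 2 ^ m - 2 ^ m := by
    rw [Finset.offDiag_card, hcard]
  have hpow : 2 * 2 ^ (m - 1) = 2 ^ m := by
    rw [← pow_succ']
    congr 1
    omega
  have hpos : 1 ≤ 2 ^ (m - 1) := Nat.one_le_two_pow
  have hpos2 : 1 ≤ 2 ^ m := Nat.one_le_two_pow
  have e1 : 2 ^ m * (2 ^ (m - 1) - 1) = 2 ^ m * 2 ^ (m - 1) - 2 ^ m := by
    rw [Nat.mul_sub, Nat.mul_one]
  have e2 : 2 * (2 ^ m * 2 ^ (m - 1)) = 2 ^ m * 2 ^ m := by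
    rw [mul_left_comm, hpow]
  have hba : 2 ^ m ≤ 2 ^ m * 2 ^ (m - 1) := Nat.le_mul_of_pos_right _ (by omega)
  rw [e1] at hsum
  omega
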